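/- Let Ric : Matrix (Fin 4) (Fin 4) ℝ and let G : Matrix (Fin 4) (Fin 4) ℝ be symmetric with det G < 0. Define the Ricci-scalar-squared Lagrangian density L̃(Ric, G) = (1/2) ∑_{η,α,ξ,λ} Ric η α · Ric ξ λ · G η α · G ξ λ · (−det G)^{−1/2} (one half of the square of the Ricci scalar R = R_{ηα} g^{ηα} times √(−g)). Then for all μ, ν ∈ Fin 4 the metric energy-momentum tensor density equals the canonical one: ∑_{β} (∂L̃/∂G_{(ν,β)}) · G μ β + ∑_{β} (∂L̃/∂G_{(β,ν)}) · G β μ = ∑_{β} (∂L̃/∂Ric_{(μ,β)}) · Ric ν β + ∑_{β} (∂L̃/∂Ric_{(β,μ)}) · Ric β ν − (if μ = ν then L̃(Ric,G) else 0). -/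

import Mathlib

attribute [local instance] Matrix.normedAddCommGroup Matrix.normedSpace

abbrev M4 := Matrix (Fin 4) (Fin 4) ℝ

-- det affine in one entry
lemma det_line (A : M4) (i j : Fin 4) (t : ℝ) :
    (A + t • Matrix.single i j (1:ℝ)).det = A.det + t * A.adjugate j i := by
  have h : A + t • Matrix.single i j (1:ℝ)
      = A.updateRow i (A i + t • (Pi.single j 1 : Fin 4 → ℝ)) := by
    ext r c
    by_cases hri : r = i
    · subst hri
      simp [Matrix.single, Pi.single_apply, Matrix.add_apply, eq_comm]
    · simp [Matrix.updateRow_ne hri, Matrix.single, Ne.symm hri, Matrix.add_apply]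
  rw [h, Matrix.det_updateRow_add, Matrix.det_updateRow_smul, Matrix.updateRow_eq_self,
    Matrix.adjugate_apply]

-- std basis sums
lemma std_sum1 (A : M4) (i j : Fin 4) :
    (∑ η, ∑ α, Matrix.single i j (1:ℝ) η α * A η α) = A i j := by
  simp [Matrix.single, ite_and, Finset.sum_ite_eq, Finset.sum_ite_eq']

lemma std_sum2 (A : M4) (i j : Fin 4) :
    (∑ η, ∑ α, A η α * Matrix.single i j (1:ℝ) η α) = A i j := by
  simp [Matrix.single, ite_and, mul_ite, Finset.sum_ite_eq, Finset.sum_ite_eq']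

lemma hasDeriv_aux (S a d b : ℝ) (hd : 0 < -d) :
    HasDerivAt (fun t : ℝ => (1/2) * (S + t*a)^2 * (-(d + t*b)) ^ (-(1/2):ℝ))
      ((S*a) * (-d)^(-(1/2):ℝ)
        + (1/2)*S^2 * ((-(1/2):ℝ) * (-d)^((-(1/2):ℝ)-1) * (-b))) 0 := by
  have hlin : HasDerivAt (fun t : ℝ => S + t*a) a 0 := by
    simpa using ((hasDerivAt_id (0:ℝ)).mul_const a).const_add S
  have h1 : HasDerivAt (fun t : ℝ => (1/2) * (S + t*a)^2) (S*a) 0 := by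
    have := (hlin.fun_pow 2).const_mul (1/2 : ℝ)
    refine this.congr_deriv ?_
    norm_num; ring
  have hlin2 : HasDerivAt (fun t : ℝ => -(d + t*b)) (-b) 0 := by
    simpa using (((hasDerivAt_id (0:ℝ)).mul_const b).const_add d).fun_neg
  have h2 : HasDerivAt (fun t : ℝ => (-(d + t*b)) ^ (-(1/2):ℝ))
      ((-(1/2):ℝ) * (-d)^((-(1/2):ℝ)-1) * (-b)) 0 := by
    have := hlin2.rpow_const (p := (-(1/2):ℝ)) (by left; norm_num; linarith)
    refine this.congr_deriv ?_
    norm_num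
    ring
  have := h1.fun_mul h2
  refine this.congr_deriv ?_
  norm_num

noncomputable def entryCLM (i j : Fin 4) : M4 →L[ℝ] ℝ :=
  ((ContinuousLinearMap.proj j : (Fin 4 → ℝ) →L[ℝ] ℝ)).comp
    (ContinuousLinearMap.proj i : M4 →L[ℝ] (Fin 4 → ℝ))

lemma entry_diff (i j : Fin 4) : Differentiable ℝ (fun A : M4 => A i j) :=
  (entryCLM i j).differentiable

lemma det_diff : Differentiable ℝ (fun A : M4 => A.det) := by
  simp only [Matrix.det_apply, Units.smul_def, zsmul_eq_mul]
  apply Differentiable.fun_sum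
  intro p _
  apply Differentiable.const_mul
  intro A
  exact (HasFDerivAt.finset_prod
    (u := Finset.univ) (x := A)
    (fun i (_ : i ∈ Finset.univ) => (entryCLM (p i) i).hasFDerivAt)).differentiableAt

/-- for quadratic gravity with the Ricci scalar squared, the metric
energy-momentum tensor density equals the canonical one. -/
theorem ricci_scalar_squared_emt_identity
    (Ric G : Matrix (Fin 4) (Fin 4) ℝ) (hG : G.IsSymm) (hdet : G.det < 0)
    (L : Matrix (Fin 4) (Fin 4) ℝ × Matrix (Fin 4) (Fin 4) ℝ → ℝ)
    (hL : L = fun x =>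
      (1 / 2) * (∑ η, ∑ α, ∑ ξ, ∑ l, x.1 η α * x.1 ξ l * x.2 η α * x.2 ξ l)
        * (-x.2.det) ^ (-(1 / 2) : ℝ)) :
    ∀ μ ν : Fin 4,
      (∑ β, fderiv ℝ L (Ric, G) (0, Matrix.single ν β 1) * G μ β)
      + (∑ β, fderiv ℝ L (Ric, G) (0, Matrix.single β ν 1) * G β μ)
      = (∑ β, fderiv ℝ L (Ric, G) (Matrix.single μ β 1, 0) * Ric ν β)
        + (∑ β, fderiv ℝ L (Ric, G) (Matrix.single β μ 1, 0) * Ric β ν)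
        - (if μ = ν then L (Ric, G) else 0) := by
  intro μ ν
  have hd : (0:ℝ) < -G.det := by linarith
  set S : ℝ := ∑ η, ∑ α, Ric η α * G η α with hS
  have hL2 : L = fun x : M4 × M4 =>
      (1/2) * (∑ η, ∑ α, x.1 η α * x.2 η α)^2 * (-x.2.det) ^ (-(1/2):ℝ) := by
    rw [hL]
    funext x
    congr 1
    congr 1
    simp only [pow_two, Finset.sum_mul, Finset.mul_sum]
    exact Finset.sum_congr rfl fun η _ => Finset.sum_congr rfl fun α _ =>
      Finset.sum_congr rfl fun ξ _ => Finset.sum_congr rfl fun l _ => by ring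
  have hQdiff : Differentiable ℝ (fun x : M4 × M4 => ∑ η, ∑ α, x.1 η α * x.2 η α) := by
    apply Differentiable.fun_sum; intro η _
    apply Differentiable.fun_sum; intro α _
    exact ((entry_diff η α).comp differentiable_fst).mul
      ((entry_diff η α).comp differentiable_snd)
  have hLdiff : DifferentiableAt ℝ L (Ric, G) := by
    rw [hL2]
    have hr : DifferentiableAt ℝ (fun x : M4 × M4 => (-x.2.det) ^ (-(1/2):ℝ)) (Ric, G) := by
      apply DifferentiableAt.rpow_const
      · exact ((det_diff.comp differentiable_snd).neg).differentiableAt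
      · left; simpa using ne_of_gt hd
    exact ((((hQdiff (Ric, G)).pow 2).const_mul (1/2:ℝ)).mul hr)
  have key : ∀ (v : M4 × M4) (c : ℝ),
      HasDerivAt (fun t : ℝ => L ((Ric, G) + t • v)) c 0 →
      fderiv ℝ L (Ric, G) v = c := by
    intro v c h
    have hline : HasDerivAt (fun t : ℝ => (Ric, G) + t • v) v 0 := by
      exact (((hasDerivAt_id (0:ℝ)).smul_const v).const_add (Ric, G)).congr_deriv (one_smul ℝ v)
    have hL0 : HasFDerivAt L (fderiv ℝ L (Ric, G)) ((Ric, G) + (0:ℝ) • v) := by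
      simpa using hLdiff.hasFDerivAt
    exact (hL0.comp_hasDerivAt 0 hline).unique h
  have hR : ∀ i j : Fin 4, fderiv ℝ L (Ric, G) (Matrix.single i j 1, 0)
      = S * G i j * (-G.det) ^ (-(1/2):ℝ) := by
    intro i j
    have hQ : ∀ t : ℝ, (∑ η, ∑ α, (Ric + t • Matrix.single i j (1:ℝ)) η α * G η α)
        = S + t * G i j := by
      intro t
      simp only [Matrix.add_apply, Matrix.smul_apply, smul_eq_mul, add_mul,
        Finset.sum_add_distrib]
      rw [← hS]
      congr 1
      rw [← std_sum1 G i j, Finset.mul_sum]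
      exact Finset.sum_congr rfl fun η _ => by
        rw [Finset.mul_sum]; exact Finset.sum_congr rfl fun α _ => by ring
    have hfun : (fun t : ℝ => L ((Ric, G) + t • (Matrix.single i j 1, (0:M4))))
        = fun t : ℝ => (1/2) * (S + t * G i j)^2 * (-(G.det + t * 0)) ^ (-(1/2):ℝ) := by
      funext t
      rw [hL2]
      simp only [Prod.fst_add, Prod.snd_add, Prod.smul_fst, Prod.smul_snd, smul_zero,
        add_zero, mul_zero]
      rw [hQ]
    have h := hasDeriv_aux S (G i j) G.det 0 hd
    rw [← hfun] at h
    refine (key _ _ h).trans ?_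
    ring
  have hGd : ∀ i j : Fin 4, fderiv ℝ L (Ric, G) (0, Matrix.single i j 1)
      = S * Ric i j * (-G.det) ^ (-(1/2):ℝ)
        + (1/2) * S^2 * ((-(1/2):ℝ) * (-G.det) ^ ((-(1/2):ℝ)-1) * (-(G.adjugate j i))) := by
    intro i j
    have hQ : ∀ t : ℝ, (∑ η, ∑ α, Ric η α * (G + t • Matrix.single i j (1:ℝ)) η α)
        = S + t * Ric i j := by
      intro t
      simp only [Matrix.add_apply, Matrix.smul_apply, smul_eq_mul, mul_add,
        Finset.sum_add_distrib]
      rw [← hS]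
      congr 1
      rw [← std_sum2 Ric i j, Finset.mul_sum]
      exact Finset.sum_congr rfl fun η _ => by
        rw [Finset.mul_sum]; exact Finset.sum_congr rfl fun α _ => by ring
    have hfun : (fun t : ℝ => L ((Ric, G) + t • ((0:M4), Matrix.single i j 1)))
        = fun t : ℝ => (1/2) * (S + t * Ric i j)^2
            * (-(G.det + t * G.adjugate j i)) ^ (-(1/2):ℝ) := by
      funext t
      rw [hL2]
      simp only [Prod.fst_add, Prod.snd_add, Prod.smul_fst, Prod.smul_snd, smul_zero,
        add_zero]
      rw [hQ, det_line]
    have h := hasDeriv_aux S (Ric i j) G.det (G.adjugate j i) hd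
    rw [← hfun] at h
    exact key _ _ h
  have hadj1 : (∑ β, G.adjugate β ν * G μ β) = (if μ = ν then G.det else 0) := by
    have h := congrArg (fun A : M4 => A μ ν) (Matrix.mul_adjugate G)
    simp only [Matrix.mul_apply, Matrix.smul_apply, Matrix.one_apply, smul_eq_mul] at h
    rw [show (∑ β, G.adjugate β ν * G μ β) = ∑ β, G μ β * G.adjugate β ν from
      Finset.sum_congr rfl fun β _ => mul_comm _ _, h, mul_ite, mul_one, mul_zero]
  have hadj2 : (∑ β, G.adjugate ν β * G β μ) = (if ν = μ then G.det else 0) := by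
    have h := congrArg (fun A : M4 => A ν μ) (Matrix.adjugate_mul G)
    simp only [Matrix.mul_apply, Matrix.smul_apply, Matrix.one_apply, smul_eq_mul] at h
    rw [h, mul_ite, mul_one, mul_zero]
  have hLval : L (Ric, G) = (1/2) * S^2 * (-G.det) ^ (-(1/2):ℝ) := by rw [hL2]
  have hrpow : (-G.det) ^ ((-(1/2):ℝ)-1) * (-G.det) = (-G.det) ^ (-(1/2):ℝ) := by
    rw [← Real.rpow_add_one (ne_of_gt hd)]
    norm_num
  simp only [hR, hGd, hLval]
  have expand1 : (∑ β, (S * Ric ν β * (-G.det) ^ (-(1/2):ℝ)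
        + 1/2 * S^2 * (-(1/2) * (-G.det) ^ ((-(1/2):ℝ)-1) * -G.adjugate β ν)) * G μ β)
      = (∑ β, S * G μ β * (-G.det) ^ (-(1/2):ℝ) * Ric ν β)
        + (1/2 * S^2 * (1/2) * (-G.det) ^ ((-(1/2):ℝ)-1))
          * ∑ β, G.adjugate β ν * G μ β := by
    rw [Finset.mul_sum, ← Finset.sum_add_distrib]
    refine Finset.sum_congr rfl fun β _ => by ring
  have expand2 : (∑ β, (S * Ric β ν * (-G.det) ^ (-(1/2):ℝ)
        + 1/2 * S^2 * (-(1/2) * (-G.det) ^ ((-(1/2):ℝ)-1) * -G.adjugate ν β)) * G β μ)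
      = (∑ β, S * G β μ * (-G.det) ^ (-(1/2):ℝ) * Ric β ν)
        + (1/2 * S^2 * (1/2) * (-G.det) ^ ((-(1/2):ℝ)-1))
          * ∑ β, G.adjugate ν β * G β μ := by
    rw [Finset.mul_sum, ← Finset.sum_add_distrib]
    refine Finset.sum_congr rfl fun β _ => by ring
  rw [expand1, expand2, hadj1, hadj2]
  by_cases hmn : μ = ν
  · subst hmn
    simp only [eq_self_iff_true, if_true]
    linear_combination (-(1/2) * S^2) * hrpow
  · simp only [if_neg hmn, if_neg (show ¬ν = μ from fun h => hmn h.symm), mul_zero,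
      add_zero, sub_zero]
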